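/- Let R be a monotone, translative, convex, finite-valued multivariate risk measure with dual representation R(u) = ⋂_{γ ∈ R^J_+\{0}} { z ∈ R^J : γᵀz ≥ sup_{μ∈M_1^J} (γᵀE^μ[u] − β(μ,γ)) }. Then for every u ∈ L^J and every v ∈ R^J: inf{ α ∈ R : v + α𝟙 ∈ R(u) } = sup{ γᵀ(E^μ[u] − v) − β(μ,γ) : μ ∈ M_1^J, γ ∈ R^J_+, γᵀ𝟙 = 1 }. -/
import Mathlib


/-- Scalarization by a reference variable: for a multivariate convex risk measure with
its dual representation, `inf{α : v + α𝟙 ∈ R(u)}` equals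
`sup{γᵀ(E^μ[u] − v) − β(μ,γ) : μ probability vector, γ ≥ 0, γᵀ𝟙 = 1}`. -/
theorem stmt11 {I J : ℕ}
    (R : (Fin I → Fin J → ℝ) → Set (Fin J → ℝ))
    (hmono : ∀ u v : Fin I → Fin J → ℝ, (∀ i j, u i j ≤ v i j) → R v ⊆ R u)
    (htrans : ∀ (u : Fin I → Fin J → ℝ) (z : Fin J → ℝ),
      R (fun i => u i + z) = (· + z) '' R u)
    (hfin : ∀ u, (R u).Nonempty ∧ R u ≠ Set.univ)
    (hconv : ∀ (u v : Fin I → Fin J → ℝ) (γ : ℝ), γ ∈ Set.Ioo (0:ℝ) 1 →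
      ∀ zu ∈ R u, ∀ zv ∈ R v,
        γ • zu + (1 - γ) • zv ∈ R (fun i => γ • u i + (1 - γ) • v i))
    (β : (Fin J → Fin I → ℝ) → (Fin J → ℝ) → EReal)
    (hβ : ∀ μ γ, β μ γ = ⨆ u : {u : Fin I → Fin J → ℝ | (0 : Fin J → ℝ) ∈ R u},
        ((∑ j, γ j * ∑ i, μ j i * (u : Fin I → Fin J → ℝ) i j : ℝ) : EReal))
    (hdual : ∀ u, R u = {z | ∀ γ : Fin J → ℝ, (∀ j, 0 ≤ γ j) → γ ≠ 0 →
        ∀ μ : Fin J → Fin I → ℝ, (∀ j i, 0 ≤ μ j i) → (∀ j, ∑ i, μ j i = 1) →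
        ((∑ j, γ j * ∑ i, μ j i * u i j : ℝ) : EReal) - β μ γ
          ≤ ((∑ j, γ j * z j : ℝ) : EReal)})
    (u : Fin I → Fin J → ℝ) (v : Fin J → ℝ) :
    (⨅ α : {α : ℝ // (fun j => v j + α) ∈ R u}, ((α : ℝ) : EReal)) =
      ⨆ mg : {mg : (Fin J → Fin I → ℝ) × (Fin J → ℝ) //
          (∀ j i, 0 ≤ mg.1 j i) ∧ (∀ j, ∑ i, mg.1 j i = 1) ∧
          (∀ j, 0 ≤ mg.2 j) ∧ ∑ j, mg.2 j = 1},
        ((∑ j, (mg : (Fin J → Fin I → ℝ) × (Fin J → ℝ)).2 j *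
            ((∑ i, (mg : (Fin J → Fin I → ℝ) × (Fin J → ℝ)).1 j i * u i j) - v j) : ℝ) : EReal)
          - β (mg : (Fin J → Fin I → ℝ) × (Fin J → ℝ)).1
              (mg : (Fin J → Fin I → ℝ) × (Fin J → ℝ)).2 := by
  classical
  -- the acceptance set is nonempty
  obtain ⟨⟨z, hz⟩, -⟩ := hfin u
  have hw : (0 : Fin J → ℝ) ∈ R (fun i => u i + (-z)) := by
    rw [htrans u (-z)]
    exact ⟨z, hz, by simp⟩
  set w : Fin I → Fin J → ℝ := fun i => u i + (-z) with hwdef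
  -- β is never ⊥
  have hβbot : ∀ μ γ, ((∑ j, γ j * ∑ i, μ j i * w i j : ℝ) : EReal) ≤ β μ γ := by
    intro μ γ
    rw [hβ]
    exact le_iSup (fun u' : {u' : Fin I → Fin J → ℝ | (0 : Fin J → ℝ) ∈ R u'} =>
      ((∑ j, γ j * ∑ i, μ j i * (u' : Fin I → Fin J → ℝ) i j : ℝ) : EReal)) ⟨w, hw⟩
  apply le_antisymm
  · -- inf ≤ sup
    by_contra h
    push_neg at h
    obtain ⟨r, hSr, hrT⟩ := EReal.exists_between_coe_real h
    have hmem : (fun j => v j + r) ∉ R u := by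
      intro hm
      exact absurd (iInf_le (fun α : {α : ℝ // (fun j => v j + α) ∈ R u} =>
        ((α : ℝ) : EReal)) ⟨r, hm⟩) (not_le.mpr hrT)
    rw [hdual u] at hmem
    simp only [Set.mem_setOf_eq, not_forall] at hmem
    obtain ⟨γ, hγ0, hγne, μ, hμ0, hμ1, hlt⟩ := hmem
    rw [not_le] at hlt
    -- β μ γ is real
    have hbne_bot : β μ γ ≠ ⊥ := fun hb => by
      have h1 := hβbot μ γ
      rw [hb] at h1
      exact absurd h1 (by simp)
    have hbne_top : β μ γ ≠ ⊤ := by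
      intro hb
      rw [hb, EReal.sub_top] at hlt
      exact absurd hlt (by simp)
    set b₀ := (β μ γ).toReal with hb₀
    have hbcoe : β μ γ = (b₀ : EReal) := (EReal.coe_toReal hbne_top hbne_bot).symm
    rw [hbcoe, ← EReal.coe_sub, EReal.coe_lt_coe_iff] at hlt
    -- normalize γ
    obtain ⟨j₀, hj₀⟩ := Function.ne_iff.mp hγne
    have hs : 0 < ∑ j, γ j :=
      Finset.sum_pos' (fun j _ => hγ0 j)
        ⟨j₀, Finset.mem_univ j₀, lt_of_le_of_ne (hγ0 j₀) (Ne.symm hj₀)⟩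
    set s := ∑ j, γ j with hsdef
    set γ' : Fin J → ℝ := fun j => s⁻¹ * γ j with hγ'def
    have hγ'0 : ∀ j, 0 ≤ γ' j := fun j => mul_nonneg (inv_nonneg.mpr hs.le) (hγ0 j)
    have hγ'1 : ∑ j, γ' j = 1 := by
      rw [hγ'def, ← Finset.mul_sum, ← hsdef, inv_mul_cancel₀ hs.ne']
    -- bound β μ γ'
    have hβ' : β μ γ' ≤ ((s⁻¹ * b₀ : ℝ) : EReal) := by
      rw [hβ]
      apply iSup_le
      rintro ⟨u', hu'⟩
      have h1 : ((∑ j, γ j * ∑ i, μ j i * u' i j : ℝ) : EReal) ≤ β μ γ := by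
        rw [hβ]
        exact le_iSup (fun u'' : {u'' : Fin I → Fin J → ℝ | (0 : Fin J → ℝ) ∈ R u''} =>
          ((∑ j, γ j * ∑ i, μ j i * (u'' : Fin I → Fin J → ℝ) i j : ℝ) : EReal)) ⟨u', hu'⟩
      rw [hbcoe, EReal.coe_le_coe_iff] at h1
      have : ∑ j, γ' j * ∑ i, μ j i * u' i j = s⁻¹ * ∑ j, γ j * ∑ i, μ j i * u' i j := by
        rw [Finset.mul_sum]; simp [hγ'def, mul_assoc]
      rw [EReal.coe_le_coe_iff, this]
      exact mul_le_mul_of_nonneg_left h1 (inv_nonneg.mpr hs.le)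
    -- the term for (μ, γ') exceeds r
    have hterm : (r : EReal) ≤
        ((∑ j, γ' j * ((∑ i, μ j i * u i j) - v j) : ℝ) : EReal) - β μ γ' := by
      have hreal : r ≤ (∑ j, γ' j * ((∑ i, μ j i * u i j) - v j)) - s⁻¹ * b₀ := by
        have key : ∑ j, γ j * (v j + r) < (∑ j, γ j * ∑ i, μ j i * u i j) - b₀ := hlt
        have e1 : ∑ j, γ' j * ((∑ i, μ j i * u i j) - v j)
            = s⁻¹ * ((∑ j, γ j * ∑ i, μ j i * u i j) - ∑ j, γ j * v j) := by
          rw [mul_sub, Finset.mul_sum, Finset.mul_sum, ← Finset.sum_sub_distrib]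
          apply Finset.sum_congr rfl
          intro j _
          simp [hγ'def]; ring
        have e2 : ∑ j, γ j * (v j + r) = (∑ j, γ j * v j) + r * s := by
          rw [hsdef, Finset.mul_sum, ← Finset.sum_add_distrib]
          apply Finset.sum_congr rfl
          intro j _
          ring
        rw [e1]
        rw [e2] at key
        have h3 : s⁻¹ * ((∑ j, γ j * v j) + r * s)
            < s⁻¹ * ((∑ j, γ j * ∑ i, μ j i * u i j) - b₀) :=
          mul_lt_mul_of_pos_left key (inv_pos.mpr hs)
        have h4 : s⁻¹ * (r * s) = r := by field_simp
        nlinarith [h3, h4]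
      calc (r : EReal) ≤ (((∑ j, γ' j * ((∑ i, μ j i * u i j) - v j)) - s⁻¹ * b₀ : ℝ) : EReal) :=
            EReal.coe_le_coe_iff.mpr hreal
        _ = ((∑ j, γ' j * ((∑ i, μ j i * u i j) - v j) : ℝ) : EReal) - ((s⁻¹ * b₀ : ℝ) : EReal) :=
            EReal.coe_sub _ _
        _ ≤ ((∑ j, γ' j * ((∑ i, μ j i * u i j) - v j) : ℝ) : EReal) - β μ γ' :=
            EReal.sub_le_sub le_rfl hβ'
    have hfeas : (∀ j i, 0 ≤ (μ, γ').1 j i) ∧ (∀ j, ∑ i, (μ, γ').1 j i = 1) ∧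
        (∀ j, 0 ≤ (μ, γ').2 j) ∧ ∑ j, (μ, γ').2 j = 1 := ⟨hμ0, hμ1, hγ'0, hγ'1⟩
    have hle : (r : EReal) ≤
        ⨆ mg : {mg : (Fin J → Fin I → ℝ) × (Fin J → ℝ) //
          (∀ j i, 0 ≤ mg.1 j i) ∧ (∀ j, ∑ i, mg.1 j i = 1) ∧
          (∀ j, 0 ≤ mg.2 j) ∧ ∑ j, mg.2 j = 1},
        ((∑ j, (mg : (Fin J → Fin I → ℝ) × (Fin J → ℝ)).2 j *
            ((∑ i, (mg : (Fin J → Fin I → ℝ) × (Fin J → ℝ)).1 j i * u i j) - v j) : ℝ) : EReal)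
          - β (mg : (Fin J → Fin I → ℝ) × (Fin J → ℝ)).1
              (mg : (Fin J → Fin I → ℝ) × (Fin J → ℝ)).2 :=
      le_trans hterm (le_iSup (fun mg : {mg : (Fin J → Fin I → ℝ) × (Fin J → ℝ) //
          (∀ j i, 0 ≤ mg.1 j i) ∧ (∀ j, ∑ i, mg.1 j i = 1) ∧
          (∀ j, 0 ≤ mg.2 j) ∧ ∑ j, mg.2 j = 1} =>
        ((∑ j, (mg : (Fin J → Fin I → ℝ) × (Fin J → ℝ)).2 j *
            ((∑ i, (mg : (Fin J → Fin I → ℝ) × (Fin J → ℝ)).1 j i * u i j) - v j) : ℝ) : EReal)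
          - β (mg : (Fin J → Fin I → ℝ) × (Fin J → ℝ)).1
              (mg : (Fin J → Fin I → ℝ) × (Fin J → ℝ)).2) ⟨(μ, γ'), hfeas⟩)
    exact absurd (lt_of_le_of_lt hle hSr) (lt_irrefl _)
  · -- sup ≤ inf
    apply iSup_le
    rintro ⟨⟨μ, γ⟩, hμ0, hμ1, hγ0, hγ1⟩
    apply le_iInf
    rintro ⟨α, hα⟩
    have hγne : γ ≠ 0 := by
      intro hg
      rw [hg] at hγ1
      simp at hγ1
    rw [hdual u] at hα
    have hd := hα γ hγ0 hγne μ hμ0 hμ1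
    -- β μ γ is not ⊥
    have hbne_bot : β μ γ ≠ ⊥ := fun hb => by
      have h1 := hβbot μ γ
      rw [hb] at h1
      exact absurd h1 (by simp)
    rcases eq_top_or_lt_top (β μ γ) with hbt | hblt
    · rw [hbt, EReal.sub_top]
      exact bot_le
    · set b₀ := (β μ γ).toReal with hb₀
      have hbcoe : β μ γ = (b₀ : EReal) := (EReal.coe_toReal hblt.ne hbne_bot).symm
      rw [hbcoe, ← EReal.coe_sub, EReal.coe_le_coe_iff] at hd ⊢
      have e1 : ∑ j, γ j * ((∑ i, μ j i * u i j) - v j)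
          = (∑ j, γ j * ∑ i, μ j i * u i j) - ∑ j, γ j * v j := by
        rw [← Finset.sum_sub_distrib]
        exact Finset.sum_congr rfl fun j _ => mul_sub _ _ _
      have e2 : ∑ j, γ j * (v j + α) = (∑ j, γ j * v j) + α := by
        have : ∑ j, γ j * (v j + α) = (∑ j, γ j * v j) + (∑ j, γ j) * α := by
          rw [Finset.sum_mul, ← Finset.sum_add_distrib]
          exact Finset.sum_congr rfl fun j _ => by ring
        rw [this, hγ1, one_mul]
      rw [e2] at hd
      rw [e1]
      linarith
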